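/- For all l, r ∈ H', all σ ∈ ℝ^n_+ and all τ ∈ ℝ^n, the Fréchet derivative 𝒮'(σ) of the solution operator 𝒮(σ) := u_σ^l satisfies r(𝒮'(σ)τ) = −Σ_{i=1}^n τ_i b_i(u_σ^l, u_σ^r). -/

import Mathlib

open scoped BigOperators

/-- For all `l, r ∈ H'`, all `σ ∈ ℝ^n_+` and all `τ ∈ ℝ^n`, the
Fréchet derivative `𝒮'(σ)` of the solution operator `𝒮(σ) := u_σ^l` satisfies
`r(𝒮'(σ)τ) = −Σ_i τ_i b_i(u_σ^l, u_σ^r)`. -/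
theorem stmt_5
    {H : Type*} [NormedAddCommGroup H] [InnerProductSpace ℝ H] [CompleteSpace H]
    {n : ℕ}
    (b0 : H →L[ℝ] H →L[ℝ] ℝ) (b : Fin n → H →L[ℝ] H →L[ℝ] ℝ)
    (hb0symm : ∀ u v : H, b0 u v = b0 v u)
    (hb0pos : ∀ v : H, 0 ≤ b0 v v)
    (hbsymm : ∀ i, ∀ u v : H, b i u v = b i v u)
    (hbpos : ∀ i, ∀ v : H, 0 ≤ b i v v)
    (C β : ℝ) (hβ : 0 < β) (hCβ : β ≤ C)
    (hcoer : ∀ v : H, β * ‖v‖ ^ 2 ≤ b0 v v + ∑ i, b i v v)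
    (hbound : ∀ v : H, b0 v v + ∑ i, b i v v ≤ C * ‖v‖ ^ 2)
    (u : (Fin n → ℝ) → (H →L[ℝ] ℝ) → H)
    (hu : ∀ σ : Fin n → ℝ, (∀ i, 0 < σ i) → ∀ l : H →L[ℝ] ℝ,
      ∀ v : H, b0 (u σ l) v + ∑ i, σ i * b i (u σ l) v = l v) :
    ∀ l r : H →L[ℝ] ℝ, ∀ σ : Fin n → ℝ, (∀ i, 0 < σ i) →
      ∀ S' : (Fin n → ℝ) →L[ℝ] H, HasFDerivAt (fun σ' => u σ' l) S' σ →
        ∀ τ : Fin n → ℝ,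
          r (S' τ) = -(∑ i, τ i * b i (u σ l) (u σ r)) := by
  intro l r σ hσ S' hS' τ
  set ul := u σ l with hul
  set ur := u σ r with hur
  set L : (Fin n → ℝ) →L[ℝ] ℝ :=
    -(∑ i, b i ul ur • ContinuousLinearMap.proj (R := ℝ) (φ := fun _ : Fin n => ℝ) i)
    with hLdef
  have hLapp : ∀ τ' : Fin n → ℝ, L τ' = -(∑ i, τ' i * b i ul ur) := by
    intro τ'
    simp [hLdef, ContinuousLinearMap.sum_apply, mul_comm]
  -- g := fun σ' => r (u σ' l) has derivative r.comp S'
  have hg : HasFDerivAt (fun σ' => r (u σ' l)) (r.comp S') σ :=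
    r.hasFDerivAt.comp σ hS'
  have hcont : Filter.Tendsto (fun σ' => u σ' l) (nhds σ) (nhds ul) := hS'.continuousAt
  -- eventual positivity
  have hpos : ∀ᶠ σ' in nhds σ, ∀ i, 0 < σ' i := by
    rw [Filter.eventually_all]
    intro i
    have hopen : IsOpen {σ' : Fin n → ℝ | 0 < σ' i} :=
      isOpen_lt continuous_const (continuous_apply i)
    exact hopen.mem_nhds (hσ i)
  -- key algebraic identity
  have key : ∀ σ' : Fin n → ℝ, (∀ i, 0 < σ' i) →
      r (u σ' l) - r ul - L (σ' - σ)
        = -∑ i, (σ' i - σ i) * ((b i).flip ur) (u σ' l - ul) := by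
    intro σ' hσ'
    have e1 : b0 (u σ' l) ur + ∑ i, σ i * b i (u σ' l) ur = r (u σ' l) := by
      have := hu σ hσ r (u σ' l)
      rw [hb0symm] at this
      rw [← this]
      exact congrArg _ (Finset.sum_congr rfl fun i _ => by rw [hbsymm])
    have e2 : b0 (u σ' l) ur + ∑ i, σ' i * b i (u σ' l) ur = l ur := hu σ' hσ' l ur
    have e3 : b0 ul ur + ∑ i, σ i * b i ul ur = l ur := hu σ hσ l ur
    have e4 : b0 ul ur + ∑ i, σ i * b i ul ur = r ul := by
      have := hu σ hσ r ul
      rw [hb0symm] at this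
      rw [← this]
      exact congrArg _ (Finset.sum_congr rfl fun i _ => by rw [hbsymm])
    have hsum : ∑ i, σ i * b i (u σ' l) ur - ∑ i, σ' i * b i (u σ' l) ur
        + ∑ i, (σ' i - σ i) * b i ul ur
        = -∑ i, (σ' i - σ i) * (b i (u σ' l) ur - b i ul ur) := by
      rw [← Finset.sum_neg_distrib, ← Finset.sum_sub_distrib, ← Finset.sum_add_distrib]
      exact Finset.sum_congr rfl fun i _ => by ring
    have hflip : ∀ i : Fin n, ((b i).flip ur) (u σ' l - ul)
        = b i (u σ' l) ur - b i ul ur := by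
      intro i
      simp [ContinuousLinearMap.flip_apply, map_sub]
    simp only [hflip, hLapp, Pi.sub_apply]
    linarith [e1, e2, e3, e4, hsum]
  -- little-o estimate
  have ho : (fun σ' => -∑ i, (σ' i - σ i) * ((b i).flip ur) (u σ' l - ul))
      =o[nhds σ] fun σ' => σ' - σ := by
    apply Asymptotics.IsLittleO.neg_left
    apply Asymptotics.IsLittleO.fun_sum
    intro i _
    have h1 : (fun σ' : Fin n → ℝ => σ' i - σ i) =O[nhds σ] fun σ' => σ' - σ := by
      have := (ContinuousLinearMap.proj (R := ℝ) (φ := fun _ : Fin n => ℝ) i).isBigO_comp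
        (fun σ' => σ' - σ) (nhds σ)
      simpa using this
    have h2 : (fun σ' => ((b i).flip ur) (u σ' l - ul)) =o[nhds σ] (fun _ => (1 : ℝ)) := by
      rw [Asymptotics.isLittleO_one_iff]
      have hsub : Filter.Tendsto (fun σ' => u σ' l - ul) (nhds σ) (nhds 0) := by
        simpa using hcont.sub (tendsto_const_nhds (x := ul))
      have h := (((b i).flip ur).continuous.tendsto 0).comp hsub
      have heq : (fun σ' => ((b i).flip ur) (u σ' l - ul))
          = ⇑((b i).flip ur) ∘ fun σ' => u σ' l - ul := rfl
      rw [show ((b i).flip ur) (0 : H) = 0 from map_zero _] at h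
      exact heq ▸ h
    rw [← Asymptotics.isLittleO_norm_right]
    simpa using h1.norm_right.mul_isLittleO h2
  have hL' : HasFDerivAt (fun σ' => r (u σ' l)) L σ := by
    rw [hasFDerivAt_iff_isLittleO]
    exact ho.congr' (hpos.mono fun σ' h => (key σ' h).symm) Filter.EventuallyEq.rfl
  have huniq : r.comp S' = L := hg.unique hL'
  calc r (S' τ) = (r.comp S') τ := rfl
    _ = L τ := by rw [huniq]
    _ = -(∑ i, τ i * b i ul ur) := hLapp τ
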